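/- The zero set of the sigma function is exactly the lattice Λ: for z ∈ ℂ, σ(z) = 0 if and only if there exist a, b ∈ ℤ with z = 2πi·a + 2πi·b·τ. -/

import Mathlib

/-- The nome `q = exp(2πiτ)`. -/
noncomputable def nome (τ : ℂ) : ℂ := Complex.exp (2 * Real.pi * Complex.I * τ)

/-- The Weierstrass-type sigma function
`σ(z) = (e^{z/2} - e^{-z/2}) ∏_{n ≥ 1} (1 - qⁿ eᶻ)(1 - qⁿ e^{-z})/(1 - qⁿ)²`,
where the product over integers `n ≥ 1` is encoded as a product over `n : ℕ`
with exponent `n + 1`. -/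
noncomputable def wsigma (τ : ℂ) (z : ℂ) : ℂ :=
  (Complex.exp (z / 2) - Complex.exp (-z / 2)) *
    ∏' n : ℕ, ((1 - nome τ ^ (n + 1) * Complex.exp z) *
      (1 - nome τ ^ (n + 1) * Complex.exp (-z)) / (1 - nome τ ^ (n + 1)) ^ 2)


open Complex Filter Finset

lemma abs_nome_lt_one {τ : ℂ} (hτ : 0 < τ.im) : ‖Complex.exp (2 * Real.pi * Complex.I * τ)‖ < 1 := by
  rw [Complex.norm_exp]
  have : (2 * (Real.pi:ℂ) * Complex.I * τ).re = -(2 * Real.pi * τ.im) := by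
    simp [Complex.mul_re, Complex.mul_im]
  rw [this]
  have := Real.pi_pos
  apply Real.exp_lt_one_iff.mpr
  nlinarith

lemma hasProd_zero_of_eq_zero {f : ℕ → ℂ} (m : ℕ) (hm : f m = 0) : HasProd f 0 := by
  have h : ∀ s : Finset ℕ, ({m} : Finset ℕ) ≤ s → ∏ i ∈ s, f i = 0 := fun s hs =>
    Finset.prod_eq_zero (hs (Finset.mem_singleton_self m)) hm
  exact tendsto_const_nhds.congr'
    ((eventually_ge_atTop ({m} : Finset ℕ)).mono fun s hs => (h s hs).symm)

lemma key_bound {q u v : ℂ} (n : ℕ) (h12 : ‖q‖ ^ (n + 1) ≤ 1 / 2) :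
    ‖(1 - q ^ (n + 1) * u) * (1 - q ^ (n + 1) * v) / (1 - q ^ (n + 1)) ^ 2 - 1‖ ≤
      4 * (‖u‖ + ‖v‖ + ‖u‖ * ‖v‖ + 3) * ‖q‖ ^ (n + 1) := by
  set c : ℂ := q ^ (n + 1) with hc
  have ht : ‖c‖ = ‖q‖ ^ (n + 1) := norm_pow q (n + 1)
  set t : ℝ := ‖q‖ ^ (n + 1) with htt
  have ht0 : 0 ≤ t := by positivity
  have hden : (1 : ℝ) / 2 ≤ ‖1 - c‖ := by
    have h1 : ‖(1 : ℂ)‖ - ‖c‖ ≤ ‖1 - c‖ := norm_sub_norm_le 1 c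
    rw [norm_one, ht] at h1
    linarith
  have hcne : (1 : ℂ) - c ≠ 0 := by
    intro h
    rw [h, norm_zero] at hden; linarith
  have heq : (1 - c * u) * (1 - c * v) / (1 - c) ^ 2 - 1 =
      (-(c * u) - c * v + (c * u) * (c * v) + 2 * c - c ^ 2) / (1 - c) ^ 2 := by
    field_simp
    ring
  rw [heq, norm_div]
  have hnum : ‖-(c * u) - c * v + (c * u) * (c * v) + 2 * c - c ^ 2‖ ≤
      t * (‖u‖ + ‖v‖ + ‖u‖ * ‖v‖ + 3) := by
    have h1 : ‖-(c * u) - c * v + (c * u) * (c * v) + 2 * c - c ^ 2‖ ≤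
        ‖c * u‖ + ‖c * v‖ + ‖(c * u) * (c * v)‖ + ‖(2 : ℂ) * c‖ + ‖c ^ 2‖ := by
      calc ‖-(c * u) - c * v + (c * u) * (c * v) + 2 * c - c ^ 2‖
          ≤ ‖-(c * u) - c * v + (c * u) * (c * v) + 2 * c‖ + ‖c ^ 2‖ := norm_sub_le _ _
        _ ≤ ‖-(c * u) - c * v + (c * u) * (c * v)‖ + ‖(2 : ℂ) * c‖ + ‖c ^ 2‖ := by
            gcongr; exact norm_add_le _ _
        _ ≤ ‖-(c * u) - c * v‖ + ‖(c * u) * (c * v)‖ + ‖(2 : ℂ) * c‖ + ‖c ^ 2‖ := by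
            gcongr; exact norm_add_le _ _
        _ ≤ ‖c * u‖ + ‖c * v‖ + ‖(c * u) * (c * v)‖ + ‖(2 : ℂ) * c‖ + ‖c ^ 2‖ := by
            gcongr
            calc ‖-(c * u) - c * v‖ ≤ ‖-(c * u)‖ + ‖c * v‖ := norm_sub_le _ _
              _ = ‖c * u‖ + ‖c * v‖ := by rw [norm_neg]
    have e1 : ‖c * u‖ = t * ‖u‖ := by rw [norm_mul, ht]
    have e2 : ‖c * v‖ = t * ‖v‖ := by rw [norm_mul, ht]
    have e3 : ‖(c * u) * (c * v)‖ = (t * ‖u‖) * (t * ‖v‖) := by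
      rw [norm_mul, e1, e2]
    have e4 : ‖(2 : ℂ) * c‖ = 2 * t := by
      rw [norm_mul, ht]; norm_num
    have e5 : ‖c ^ 2‖ = t ^ 2 := by rw [norm_pow, ht]
    rw [e1, e2, e3, e4, e5] at h1
    have hu0 : (0:ℝ) ≤ ‖u‖ := norm_nonneg u
    have hv0 : (0:ℝ) ≤ ‖v‖ := norm_nonneg v
    have hA : t ^ 2 ≤ t := by nlinarith
    have hB : t * ‖u‖ * (t * ‖v‖) ≤ t * (‖u‖ * ‖v‖) := by nlinarith [mul_nonneg hu0 hv0]
    linarith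
  have hden2 : (1 : ℝ) / 4 ≤ ‖(1 - c) ^ 2‖ := by
    rw [norm_pow]
    nlinarith
  calc ‖-(c * u) - c * v + (c * u) * (c * v) + 2 * c - c ^ 2‖ / ‖(1 - c) ^ 2‖
      ≤ (t * (‖u‖ + ‖v‖ + ‖u‖ * ‖v‖ + 3)) / (1 / 4) := by
        apply div_le_div₀ (by positivity) hnum (by norm_num) hden2
    _ = 4 * (‖u‖ + ‖v‖ + ‖u‖ * ‖v‖ + 3) * t := by ring

lemma tprod_ne_zero {q u v : ℂ} (hq : ‖q‖ < 1) (hu : ∀ n : ℕ, q ^ (n + 1) * u ≠ 1)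
    (hv : ∀ n : ℕ, q ^ (n + 1) * v ≠ 1) :
    (∏' n : ℕ, ((1 - q ^ (n + 1) * u) * (1 - q ^ (n + 1) * v) / (1 - q ^ (n + 1)) ^ 2)) ≠ 0 := by
  set F : ℕ → ℂ := fun n => (1 - q ^ (n + 1) * u) * (1 - q ^ (n + 1) * v) / (1 - q ^ (n + 1)) ^ 2
    with hF
  set K : ℝ := 4 * (‖u‖ + ‖v‖ + ‖u‖ * ‖v‖ + 3) with hK
  have hK0 : 0 < K := by positivity
  have hqn : ∀ n : ℕ, (1 : ℂ) - q ^ (n + 1) ≠ 0 := by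
    intro n h
    have h2 : ‖q ^ (n + 1)‖ < 1 := by
      rw [norm_pow]
      exact pow_lt_one₀ (norm_nonneg q) hq (Nat.succ_ne_zero n)
    have : q ^ (n + 1) = 1 := by linear_combination -h
    rw [this, norm_one] at h2
    exact lt_irrefl _ h2
  have hF0 : ∀ n : ℕ, F n ≠ 0 := by
    intro n
    apply div_ne_zero (mul_ne_zero ?_ ?_) (pow_ne_zero 2 (hqn n))
    · exact sub_ne_zero.mpr fun h => hu n h.symm
    · exact sub_ne_zero.mpr fun h => hv n h.symm
  -- eventual bounds
  have htend : Tendsto (fun n : ℕ => ‖q‖ ^ (n + 1)) atTop (nhds 0) := by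
    have := tendsto_pow_atTop_nhds_zero_of_lt_one (norm_nonneg q) hq
    exact this.comp (tendsto_add_atTop_nat 1)
  have hev1 : ∀ᶠ n in atTop, ‖q‖ ^ (n + 1) ≤ 1 / 2 :=
    (htend.eventually_lt_const (by norm_num : (0:ℝ) < 1/2)).mono fun n h => h.le
  have hev2 : ∀ᶠ n in atTop, K * ‖q‖ ^ (n + 1) ≤ 1 / 2 := by
    have h2 : Tendsto (fun n : ℕ => K * ‖q‖ ^ (n + 1)) atTop (nhds 0) := by
      simpa using htend.const_mul K
    exact (h2.eventually_lt_const (by norm_num : (0:ℝ) < 1/2)).mono fun n h => h.le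
  have hlog : Summable fun n => Complex.log (F n) := by
    apply Summable.of_norm_bounded_eventually_nat (g := fun n => 3 / 2 * (K * ‖q‖ ^ (n + 1)))
    · apply Summable.mul_left
      apply Summable.mul_left
      have := (summable_geometric_of_lt_one (norm_nonneg q) hq).mul_left ‖q‖
      apply this.congr
      intro n
      rw [pow_succ]
      ring
    · filter_upwards [hev1, hev2] with n h1 h2
      have hb : ‖F n - 1‖ ≤ K * ‖q‖ ^ (n + 1) := key_bound n h1
      have hb2 : ‖F n - 1‖ ≤ 1 / 2 := hb.trans h2
      have := Complex.norm_log_one_add_half_le_self hb2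
      rw [add_sub_cancel] at this
      calc ‖Complex.log (F n)‖ ≤ 3 / 2 * ‖F n - 1‖ := this
        _ ≤ 3 / 2 * (K * ‖q‖ ^ (n + 1)) := by linarith
  have := Complex.cexp_tsum_eq_tprod (f := F) hF0 hlog
  rw [← this]
  exact Complex.exp_ne_zero _

theorem wsigma_zero_iff_mem_lattice (τ : ℂ) (hτ : 0 < τ.im) :
    ∀ z : ℂ, wsigma τ z = 0 ↔
      ∃ a b : ℤ, z = 2 * Real.pi * Complex.I * a + 2 * Real.pi * Complex.I * b * τ := by
  intro z
  have hq : ‖nome τ‖ < 1 := abs_nome_lt_one hτ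
  set q : ℂ := nome τ with hqdef
  have hpow : ∀ n : ℕ, q ^ (n + 1) = Complex.exp (((n : ℂ) + 1) * (2 * Real.pi * Complex.I * τ)) := by
    intro n
    rw [hqdef, nome, ← Complex.exp_nat_mul]
    push_cast
    ring_nf
  set F : ℕ → ℂ := fun n => (1 - q ^ (n + 1) * Complex.exp z) *
      (1 - q ^ (n + 1) * Complex.exp (-z)) / (1 - q ^ (n + 1)) ^ 2 with hFdef
  have hfactor : Complex.exp (z / 2) - Complex.exp (-z / 2) =
      Complex.exp (-z / 2) * (Complex.exp z - 1) := by
    rw [mul_sub, ← Complex.exp_add, mul_one]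
    ring_nf
  constructor
  · intro h
    rw [wsigma] at h
    rcases mul_eq_zero.mp h with h1 | h2
    · -- first factor zero: exp z = 1
      rw [hfactor, mul_eq_zero] at h1
      rcases h1 with h1 | h1
      · exact absurd h1 (Complex.exp_ne_zero _)
      · have hz1 : Complex.exp z = 1 := by linear_combination h1
        obtain ⟨k, hk⟩ := Complex.exp_eq_one_iff.mp hz1
        exact ⟨k, 0, by rw [hk]; push_cast; ring⟩
    · -- product zero
      by_cases hc : ∃ n : ℕ, q ^ (n + 1) * Complex.exp z = 1 ∨ q ^ (n + 1) * Complex.exp (-z) = 1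
      · obtain ⟨n, hn⟩ := hc
        rcases hn with hn | hn
        · have : Complex.exp (((n : ℂ) + 1) * (2 * Real.pi * Complex.I * τ) + z) = 1 := by
            rw [Complex.exp_add, ← hpow n]; exact hn
          obtain ⟨k, hk⟩ := Complex.exp_eq_one_iff.mp this
          refine ⟨k, -((n : ℤ) + 1), ?_⟩
          push_cast
          linear_combination hk
        · have : Complex.exp (((n : ℂ) + 1) * (2 * Real.pi * Complex.I * τ) + -z) = 1 := by
            rw [Complex.exp_add, ← hpow n]; exact hn
          obtain ⟨k, hk⟩ := Complex.exp_eq_one_iff.mp this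
          refine ⟨-k, (n : ℤ) + 1, ?_⟩
          push_cast
          linear_combination -hk
      · push_neg at hc
        exact absurd h2 (tprod_ne_zero hq (fun n => (hc n).1) (fun n => (hc n).2))
  · rintro ⟨a, b, rfl⟩
    rw [wsigma]
    rcases lt_trichotomy b 0 with hb | hb | hb
    · -- b < 0 : factor with exp z vanishes at n = (-b-1).toNat
      set n : ℕ := (-b - 1).toNat with hn
      have hncast : ((n : ℂ) + 1) = -(b : ℂ) := by
        have : ((-b - 1).toNat : ℤ) = -b - 1 := Int.toNat_of_nonneg (by omega)
        have h2 : ((n : ℤ) : ℂ) = ((-b - 1 : ℤ) : ℂ) := by rw [← this]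
        push_cast at h2 ⊢
        linear_combination h2
      have hzero : F n = 0 := by
        have : q ^ (n + 1) * Complex.exp (2 * Real.pi * Complex.I * a + 2 * Real.pi * Complex.I * b * τ) = 1 := by
          rw [hpow n, ← Complex.exp_add, hncast]
          have : -(b : ℂ) * (2 * Real.pi * Complex.I * τ) +
              (2 * Real.pi * Complex.I * a + 2 * Real.pi * Complex.I * b * τ) =
              (a : ℂ) * (2 * Real.pi * Complex.I) := by ring
          rw [this, Complex.exp_int_mul_two_pi_mul_I]
        rw [hFdef]
        simp only []
        rw [this]
        simp
      rw [(hasProd_zero_of_eq_zero n hzero).tprod_eq, mul_zero]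
    · -- b = 0 : first factor vanishes
      subst hb
      rw [hfactor]
      have : Complex.exp (2 * Real.pi * Complex.I * a + 2 * Real.pi * Complex.I * (0 : ℤ) * τ) = 1 := by
        have h2 : (2 * (Real.pi : ℂ) * Complex.I * a + 2 * Real.pi * Complex.I * (0 : ℤ) * τ) =
            (a : ℂ) * (2 * Real.pi * Complex.I) := by push_cast; ring
        rw [h2, Complex.exp_int_mul_two_pi_mul_I]
      rw [this]
      simp
    · -- b > 0 : factor with exp (-z) vanishes at n = (b-1).toNat
      set n : ℕ := (b - 1).toNat with hn
      have hncast : ((n : ℂ) + 1) = (b : ℂ) := by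
        have : ((b - 1).toNat : ℤ) = b - 1 := Int.toNat_of_nonneg (by omega)
        have h2 : ((n : ℤ) : ℂ) = ((b - 1 : ℤ) : ℂ) := by rw [← this]
        push_cast at h2 ⊢
        linear_combination h2
      have hzero : F n = 0 := by
        have : q ^ (n + 1) * Complex.exp (-(2 * Real.pi * Complex.I * a + 2 * Real.pi * Complex.I * b * τ)) = 1 := by
          rw [hpow n, ← Complex.exp_add, hncast]
          have : (b : ℂ) * (2 * Real.pi * Complex.I * τ) +
              -(2 * Real.pi * Complex.I * a + 2 * Real.pi * Complex.I * b * τ) =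
              (-a : ℂ) * (2 * Real.pi * Complex.I) := by push_cast; ring
          rw [this]
          exact_mod_cast Complex.exp_int_mul_two_pi_mul_I (-a)
        rw [hFdef]
        simp only []
        rw [this]
        simp
      rw [(hasProd_zero_of_eq_zero n hzero).tprod_eq, mul_zero]
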